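/- Suppose φ' = A(x)φ has an exponential dichotomy on ℝ with constants K, μ > 0 and projections P(x), where A ∈ C(ℝ, ℂ^{n×n}) is bounded, and let g ∈ C(ℝ, ℂⁿ) be bounded. Then the function φ(x) = ∫_{−∞}^x T(x,y)P(y)g(y) dy − ∫_x^∞ T(x,y)(I−P(y))g(y) dy is the unique bounded C¹ solution of φ' = A(x)φ + g(x), and it satisfies the pointwise bound ‖φ(x)‖ ≤ K ∫_ℝ e^{−μ|x−y|} ‖g(y)‖ dy for all x ∈ ℝ. -/

import Mathlib

open MeasureTheory

/-- Operator norm of a square complex matrix, induced by the sup norm on `ℂ^n`. -/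
noncomputable def matOpNorm {n : ℕ} (M : Matrix (Fin n) (Fin n) ℂ) : ℝ :=
  ‖LinearMap.toContinuousLinearMap M.mulVecLin‖

open Real Set Filter intervalIntegral

namespace DichAux
variable {n : ℕ}

noncomputable def clm (M : Matrix (Fin n) (Fin n) ℂ) : (Fin n → ℂ) →L[ℂ] (Fin n → ℂ) :=
  LinearMap.toContinuousLinearMap M.mulVecLin

lemma clm_apply (M : Matrix (Fin n) (Fin n) ℂ) (v : Fin n → ℂ) : clm M v = M.mulVec v := rfl

lemma matOpNorm_eq (M : Matrix (Fin n) (Fin n) ℂ) : matOpNorm M = ‖clm M‖ := rfl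

lemma norm_mulVec_le (M : Matrix (Fin n) (Fin n) ℂ) (v : Fin n → ℂ) :
    ‖M.mulVec v‖ ≤ matOpNorm M * ‖v‖ := (clm M).le_opNorm v

lemma matOpNorm_nonneg (M : Matrix (Fin n) (Fin n) ℂ) : 0 ≤ matOpNorm M := norm_nonneg _

lemma matOpNorm_mul_le (M N : Matrix (Fin n) (Fin n) ℂ) :
    matOpNorm (M * N) ≤ matOpNorm M * matOpNorm N := by
  have hc : clm (M * N) = (clm M).comp (clm N) := by
    ext v
    simp [clm_apply, Matrix.mulVec_mulVec]
  rw [matOpNorm_eq, hc]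
  exact ContinuousLinearMap.opNorm_comp_le _ _

lemma integrableOn_exp_mul_Iic {b : ℝ} (hb : 0 < b) (x : ℝ) :
    IntegrableOn (fun y => Real.exp (b * y)) (Set.Iic x) := by
  have h1 : IntegrableOn (fun y : ℝ => Real.exp (-b * y)) (Set.Ioi (-x)) :=
    exp_neg_integrableOn_Ioi (-x) hb
  have h2 := ((Measure.measurePreserving_neg (volume : Measure ℝ)).integrableOn_comp_preimage
      (Homeomorph.neg ℝ).measurableEmbedding (f := fun y : ℝ => Real.exp (-b * y))
      (s := Set.Ioi (-x))).mpr h1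
  have hset : (Neg.neg ⁻¹' Set.Ioi (-x) : Set ℝ) = Set.Iio x := by
    ext y; simp [Set.mem_Ioi, Set.mem_Iio]
  rw [hset] at h2
  rw [integrableOn_Iic_iff_integrableOn_Iio]
  refine h2.congr_fun (fun y _ => ?_) measurableSet_Iio
  simp [Homeomorph.neg]

lemma integrableOn_exp_sub_Iic {μ : ℝ} (hμ : 0 < μ) (x c : ℝ) :
    IntegrableOn (fun y => c * Real.exp (-μ * (x - y))) (Set.Iic x) := by
  have he : (fun y => c * Real.exp (-μ * (x - y)))
      = fun y => (c * Real.exp (-μ * x)) * Real.exp (μ * y) := by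
    funext y
    rw [mul_assoc, ← Real.exp_add]
    ring_nf
  rw [he]
  exact (integrableOn_exp_mul_Iic hμ x).const_mul _

lemma integrableOn_exp_sub_Ici {μ : ℝ} (hμ : 0 < μ) (x c : ℝ) :
    IntegrableOn (fun y => c * Real.exp (-μ * (y - x))) (Set.Ici x) := by
  have he : (fun y => c * Real.exp (-μ * (y - x)))
      = fun y => (c * Real.exp (μ * x)) * Real.exp (-μ * y) := by
    funext y
    rw [mul_assoc, ← Real.exp_add]
    ring_nf
  rw [he]
  rw [integrableOn_Ici_iff_integrableOn_Ioi]
  exact (exp_neg_integrableOn_Ioi x hμ).const_mul _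

lemma integral_Ici_sub_Ici {E : Type*} [NormedAddCommGroup E] [NormedSpace ℝ E] {f : ℝ → E}
    {a b : ℝ} (ha : IntegrableOn f (Set.Ici a)) (hb : IntegrableOn f (Set.Ici b)) :
    ((∫ x in Set.Ici a, f x) - ∫ x in Set.Ici b, f x) = ∫ x in a..b, f x := by
  wlog hab : a ≤ b generalizing a b
  · rw [intervalIntegral.integral_symm, ← this hb ha (le_of_not_ge hab), neg_sub]
  rw [sub_eq_iff_eq_add, intervalIntegral.integral_of_le hab, integral_Ici_eq_integral_Ioi,
    integral_Ici_eq_integral_Ioi (x := b),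
    ← setIntegral_union (Ioc_disjoint_Ioi le_rfl) measurableSet_Ioi
      (ha.mono_set (fun y hy => lt_of_lt_of_le hy.1 le_rfl |>.le) |>.mono_set
        (fun y hy => hy)) (hb.mono_set Ioi_subset_Ici_self),
    Set.Ioc_union_Ioi_eq_Ioi hab]

end DichAux

/-- Variation-of-constants: if `φ' = A(x)φ` has an exponential dichotomy on `ℝ` with
constants `K, μ` and projections `P(x)`, `A` is continuous and bounded and `g` is continuous
and bounded, then `φ(x) = ∫_{−∞}^x T(x,y)P(y)g(y) dy − ∫_x^∞ T(x,y)(I−P(y))g(y) dy` is the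
unique bounded `C¹` solution of `φ' = A(x)φ + g(x)`, and it satisfies the pointwise bound
`‖φ(x)‖ ≤ K ∫_ℝ e^{−μ|x−y|} ‖g(y)‖ dy`. -/
theorem dichotomy_inhomogeneous_solution (n : ℕ)
    (A : ℝ → Matrix (Fin n) (Fin n) ℂ)
    (hAcont : ∀ i j, Continuous fun x => A x i j)
    (CA : ℝ) (hCA : ∀ x, matOpNorm (A x) ≤ CA)
    (g : ℝ → Fin n → ℂ) (hgcont : Continuous g) (Cg : ℝ) (hCg : ∀ x, ‖g x‖ ≤ Cg)
    (T : ℝ → ℝ → Matrix (Fin n) (Fin n) ℂ)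
    (hTid : ∀ y, T y y = 1)
    (hTcoc : ∀ x y z, T x y * T y z = T x z)
    (hTode : ∀ y x (v : Fin n → ℂ),
      HasDerivAt (fun s => (T s y).mulVec v) ((A x).mulVec ((T x y).mulVec v)) x)
    (K μ : ℝ) (hK : 0 < K) (hμ : 0 < μ)
    (P : ℝ → Matrix (Fin n) (Fin n) ℂ)
    (hPproj : ∀ x, P x * P x = P x)
    (hPcomm : ∀ x y, P x * T x y = T x y * P y)
    (hPs : ∀ x y, y ≤ x → matOpNorm (T x y * P y) ≤ K * Real.exp (-μ * (x - y)))
    (hPu : ∀ x y, x ≤ y → matOpNorm (T x y * (1 - P y)) ≤ K * Real.exp (-μ * (y - x))) :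
    let φ : ℝ → Fin n → ℂ := fun x =>
      (∫ y in Set.Iic x, (T x y * P y).mulVec (g y)) -
        ∫ y in Set.Ici x, (T x y * (1 - P y)).mulVec (g y)
    (∀ x, HasDerivAt φ ((A x).mulVec (φ x) + g x) x) ∧
    (∃ C : ℝ, ∀ x, ‖φ x‖ ≤ C) ∧
    (∀ x, ‖φ x‖ ≤ K * ∫ y : ℝ, Real.exp (-μ * |x - y|) * ‖g y‖) ∧
    (∀ ψ : ℝ → Fin n → ℂ,
      (∀ x, HasDerivAt ψ ((A x).mulVec (ψ x) + g x) x) →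
      (∃ C : ℝ, ∀ x, ‖ψ x‖ ≤ C) → ψ = φ) := by
  intro φ
  have hCg0 : (0:ℝ) ≤ Cg := le_trans (norm_nonneg (g 0)) (hCg 0)
  -- derivative of entries of T s 0
  have hTentry : ∀ (x : ℝ) (i j : Fin n),
      HasDerivAt (fun s => T s 0 i j) ((A x * T x 0) i j) x := by
    intro x i j
    have h2 := hasDerivAt_pi.mp (hTode 0 x (Pi.single j 1)) i
    simp only [Matrix.mulVec_mulVec, Matrix.mulVec_single_one, Matrix.col_apply, mul_one] at h2
    exact h2
  have hTcont0 : Continuous (fun s => T s 0) := by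
    apply continuous_matrix
    intro i j
    exact continuous_iff_continuousAt.mpr fun x => (hTentry x i j).continuousAt
  have hVU : ∀ s, T 0 s * T s 0 = 1 := fun s => by rw [hTcoc 0 s 0, hTid]
  have hUV : ∀ s, T s 0 * T 0 s = 1 := fun s => by rw [hTcoc s 0 s, hTid]
  have hVcont : Continuous (fun s => T 0 s) := by
    have hdet : ∀ s, (T s 0).det ≠ 0 := by
      intro s hd
      have h1 : (T 0 s).det * (T s 0).det = 1 := by
        rw [← Matrix.det_mul, hVU s, Matrix.det_one]
      rw [hd, mul_zero] at h1; exact zero_ne_one h1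
    have hVinv : ∀ s, T 0 s = ((T s 0).det)⁻¹ • (T s 0).adjugate := by
      intro s
      have h1 : (T s 0)⁻¹ = T 0 s := Matrix.inv_eq_left_inv (hVU s)
      rw [← h1, Matrix.inv_def, Ring.inverse_eq_inv]
    rw [show (fun s => T 0 s) = fun s => ((T s 0).det)⁻¹ • (T s 0).adjugate from funext hVinv]
    exact ((hTcont0.matrix_det).inv₀ hdet).smul hTcont0.matrix_adjugate
  have hPcont : Continuous P := by
    have hPrep : ∀ s, P s = T s 0 * P 0 * T 0 s := by
      intro s
      have h := hPcomm s 0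
      calc P s = P s * (T s 0 * T 0 s) := by rw [hUV, mul_one]
        _ = P s * T s 0 * T 0 s := by rw [mul_assoc]
        _ = T s 0 * P 0 * T 0 s := by rw [h]
    rw [show P = fun s => T s 0 * P 0 * T 0 s from funext hPrep]
    exact (hTcont0.matrix_mul continuous_const).matrix_mul hVcont
  set f₁ : ℝ → Fin n → ℂ := fun y => ((T 0 y) * P y).mulVec (g y) with hf₁def
  set f₂ : ℝ → Fin n → ℂ := fun y => ((T 0 y) * (1 - P y)).mulVec (g y) with hf₂def
  have hcf₁ : Continuous f₁ := (hVcont.matrix_mul hPcont).matrix_mulVec hgcont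
  have hcf₂ : Continuous f₂ :=
    (hVcont.matrix_mul (continuous_const.sub hPcont)).matrix_mulVec hgcont
  have hsplit₁ : ∀ x y : ℝ, T x y * P y = T x 0 * (T 0 y * P y) := fun x y => by
    rw [← mul_assoc, hTcoc]
  have hsplit₂ : ∀ x y : ℝ, T x y * (1 - P y) = T x 0 * (T 0 y * (1 - P y)) := fun x y => by
    rw [← mul_assoc, hTcoc]
  have hVsplit₁ : ∀ x y : ℝ, T 0 y * P y = T 0 x * (T x y * P y) := fun x y => by
    rw [← mul_assoc, hTcoc]
  have hVsplit₂ : ∀ x y : ℝ, T 0 y * (1 - P y) = T 0 x * (T x y * (1 - P y)) := fun x y => by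
    rw [← mul_assoc, hTcoc]
  have hIntf₁ : ∀ x : ℝ, IntegrableOn f₁ (Set.Iic x) := by
    intro x
    refine Integrable.mono'
      (DichAux.integrableOn_exp_sub_Iic hμ x (matOpNorm (T 0 x) * K * Cg))
      hcf₁.aestronglyMeasurable ?_
    rw [ae_restrict_iff' measurableSet_Iic]
    refine Filter.Eventually.of_forall fun y hy => ?_
    calc ‖f₁ y‖ ≤ matOpNorm (T 0 y * P y) * ‖g y‖ := DichAux.norm_mulVec_le _ _
      _ ≤ (matOpNorm (T 0 x) * (K * Real.exp (-μ * (x - y)))) * Cg := by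
          refine mul_le_mul ?_ (hCg y) (norm_nonneg _)
            (mul_nonneg (DichAux.matOpNorm_nonneg _) (by positivity))
          rw [hVsplit₁ x y]
          exact le_trans (DichAux.matOpNorm_mul_le _ _)
            (mul_le_mul_of_nonneg_left (hPs x y hy) (DichAux.matOpNorm_nonneg _))
      _ = matOpNorm (T 0 x) * K * Cg * Real.exp (-μ * (x - y)) := by ring
  have hIntf₂ : ∀ x : ℝ, IntegrableOn f₂ (Set.Ici x) := by
    intro x
    refine Integrable.mono'
      (DichAux.integrableOn_exp_sub_Ici hμ x (matOpNorm (T 0 x) * K * Cg))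
      hcf₂.aestronglyMeasurable ?_
    rw [ae_restrict_iff' measurableSet_Ici]
    refine Filter.Eventually.of_forall fun y hy => ?_
    calc ‖f₂ y‖ ≤ matOpNorm (T 0 y * (1 - P y)) * ‖g y‖ := DichAux.norm_mulVec_le _ _
      _ ≤ (matOpNorm (T 0 x) * (K * Real.exp (-μ * (y - x)))) * Cg := by
          refine mul_le_mul ?_ (hCg y) (norm_nonneg _)
            (mul_nonneg (DichAux.matOpNorm_nonneg _) (by positivity))
          rw [hVsplit₂ x y]
          exact le_trans (DichAux.matOpNorm_mul_le _ _)
            (mul_le_mul_of_nonneg_left (hPu x y hy) (DichAux.matOpNorm_nonneg _))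
      _ = matOpNorm (T 0 x) * K * Cg * Real.exp (-μ * (y - x)) := by ring
  have hd₁ : ∀ x : ℝ, (fun y => (T x y * P y).mulVec (g y))
      = fun y => DichAux.clm (T x 0) (f₁ y) := by
    intro x; funext y
    rw [DichAux.clm_apply, hf₁def]
    dsimp only
    rw [Matrix.mulVec_mulVec, ← hsplit₁]
  have hd₂ : ∀ x : ℝ, (fun y => (T x y * (1 - P y)).mulVec (g y))
      = fun y => DichAux.clm (T x 0) (f₂ y) := by
    intro x; funext y
    rw [DichAux.clm_apply, hf₂def]
    dsimp only
    rw [Matrix.mulVec_mulVec, ← hsplit₂]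
  have hIg₁ : ∀ x : ℝ, IntegrableOn (fun y => (T x y * P y).mulVec (g y)) (Set.Iic x) := by
    intro x; rw [hd₁ x]; exact (DichAux.clm (T x 0)).integrable_comp (hIntf₁ x)
  have hIg₂ : ∀ x : ℝ,
      IntegrableOn (fun y => (T x y * (1 - P y)).mulVec (g y)) (Set.Ici x) := by
    intro x; rw [hd₂ x]; exact (DichAux.clm (T x 0)).integrable_comp (hIntf₂ x)
  set Fv : ℝ → Fin n → ℂ := fun t => (∫ y in Set.Iic t, f₁ y) - ∫ y in Set.Ici t, f₂ y
    with hFvdef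
  have hφeq : ∀ x, φ x = (T x 0).mulVec (Fv x) := by
    intro x
    show ((∫ y in Set.Iic x, (T x y * P y).mulVec (g y)) -
        ∫ y in Set.Ici x, (T x y * (1 - P y)).mulVec (g y)) = _
    rw [hd₁ x, hd₂ x, ContinuousLinearMap.integral_comp_comm _ (hIntf₁ x),
      ContinuousLinearMap.integral_comp_comm _ (hIntf₂ x), ← map_sub]
    rfl
  have hF' : ∀ x, HasDerivAt Fv ((T 0 x).mulVec (g x)) x := by
    intro x
    have e : Fv = fun t => Fv x + ∫ y in x..t, (f₁ y + f₂ y) := by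
      funext t
      have e₁ : (∫ y in Set.Iic t, f₁ y) - ∫ y in Set.Iic x, f₁ y = ∫ y in x..t, f₁ y :=
        integral_Iic_sub_Iic (hIntf₁ x) (hIntf₁ t)
      have e₂ : (∫ y in Set.Ici x, f₂ y) - ∫ y in Set.Ici t, f₂ y = ∫ y in x..t, f₂ y :=
        DichAux.integral_Ici_sub_Ici (hIntf₂ x) (hIntf₂ t)
      have e₃ : (∫ y in x..t, (f₁ y + f₂ y))
          = (∫ y in x..t, f₁ y) + ∫ y in x..t, f₂ y :=
        intervalIntegral.integral_add (hcf₁.intervalIntegrable _ _)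
          (hcf₂.intervalIntegrable _ _)
      show (∫ y in Set.Iic t, f₁ y) - ∫ y in Set.Ici t, f₂ y
          = ((∫ y in Set.Iic x, f₁ y) - ∫ y in Set.Ici x, f₂ y) + _
      rw [e₃, ← e₁, ← e₂]
      abel
    rw [e]
    have hd := intervalIntegral.integral_hasDerivAt_right
      ((hcf₁.add hcf₂).intervalIntegrable x x)
      ((hcf₁.add hcf₂).stronglyMeasurableAtFilter _ _) (hcf₁.add hcf₂).continuousAt
    have hd2 := hd.const_add (Fv x)
    refine hd2.congr_deriv (Eq.symm ?_)
    show (T 0 x).mulVec (g x) = f₁ x + f₂ x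
    rw [hf₁def, hf₂def]
    dsimp only
    rw [← Matrix.add_mulVec, ← Matrix.mul_add]
    congr 1
    rw [add_sub_cancel]
    rw [mul_one]
  -- the main derivative
  have part1 : ∀ x, HasDerivAt φ ((A x).mulVec (φ x) + g x) x := by
    intro x
    have key : HasDerivAt (fun t => (T t 0).mulVec (Fv t))
        ((A x).mulVec ((T x 0).mulVec (Fv x)) + g x) x := by
      rw [hasDerivAt_pi]
      intro i
      have hsum : HasDerivAt (fun t => ∑ j, T t 0 i j * Fv t j)
          (∑ j, ((A x * T x 0) i j * Fv x j
            + T x 0 i j * ((T 0 x).mulVec (g x)) j)) x := by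
        apply HasDerivAt.fun_sum
        intro j _
        exact (hTentry x i j).mul (hasDerivAt_pi.mp (hF' x) j)
      have hfeq : (fun t => ((T t 0).mulVec (Fv t)) i) = fun t => ∑ j, T t 0 i j * Fv t j := by
        funext t
        simp [Matrix.mulVec, dotProduct]
      rw [hfeq]
      refine hsum.congr_deriv (Eq.symm ?_)
      have hg1 : (T x 0).mulVec ((T 0 x).mulVec (g x)) = g x := by
        rw [Matrix.mulVec_mulVec, hUV, Matrix.one_mulVec]
      calc ((A x).mulVec ((T x 0).mulVec (Fv x)) + g x) i
          = ((A x * T x 0).mulVec (Fv x)) i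
            + ((T x 0).mulVec ((T 0 x).mulVec (g x))) i := by
            rw [Matrix.mulVec_mulVec, hg1]; rfl
        _ = (∑ j, (A x * T x 0) i j * Fv x j)
            + ∑ j, T x 0 i j * ((T 0 x).mulVec (g x)) j := by
            simp [Matrix.mulVec, dotProduct]
        _ = ∑ j, ((A x * T x 0) i j * Fv x j
            + T x 0 i j * ((T 0 x).mulVec (g x)) j) := by
            rw [Finset.sum_add_distrib]
    have hφfun : φ = fun t => (T t 0).mulVec (Fv t) := funext hφeq
    rw [hφfun]
    exact key
  -- pointwise exponential bound
  have hcq : ∀ x : ℝ, Continuous (fun y => Real.exp (-μ * |x - y|) * ‖g y‖) := by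
    intro x
    exact (Real.continuous_exp.comp
      ((continuous_const.mul ((continuous_const.sub continuous_id).abs)))).mul hgcont.norm
  have hq1 : ∀ x : ℝ, IntegrableOn (fun y => Real.exp (-μ * |x - y|) * ‖g y‖) (Set.Iic x) := by
    intro x
    refine Integrable.mono' (DichAux.integrableOn_exp_sub_Iic hμ x Cg)
      (hcq x).aestronglyMeasurable ?_
    rw [ae_restrict_iff' measurableSet_Iic]
    refine Filter.Eventually.of_forall fun y hy => ?_
    have habs : |x - y| = x - y := abs_of_nonneg (sub_nonneg.mpr hy)
    rw [Real.norm_of_nonneg (by positivity), habs]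
    calc Real.exp (-μ * (x - y)) * ‖g y‖ ≤ Real.exp (-μ * (x - y)) * Cg :=
          mul_le_mul_of_nonneg_left (hCg y) (Real.exp_pos _).le
      _ = Cg * Real.exp (-μ * (x - y)) := by ring
  have hq2 : ∀ x : ℝ, IntegrableOn (fun y => Real.exp (-μ * |x - y|) * ‖g y‖) (Set.Ici x) := by
    intro x
    refine Integrable.mono' (DichAux.integrableOn_exp_sub_Ici hμ x Cg)
      (hcq x).aestronglyMeasurable ?_
    rw [ae_restrict_iff' measurableSet_Ici]
    refine Filter.Eventually.of_forall fun y hy => ?_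
    have habs : |x - y| = y - x := by rw [abs_sub_comm]; exact abs_of_nonneg (sub_nonneg.mpr hy)
    rw [Real.norm_of_nonneg (by positivity), habs]
    calc Real.exp (-μ * (y - x)) * ‖g y‖ ≤ Real.exp (-μ * (y - x)) * Cg :=
          mul_le_mul_of_nonneg_left (hCg y) (Real.exp_pos _).le
      _ = Cg * Real.exp (-μ * (y - x)) := by ring
  have part3 : ∀ x, ‖φ x‖ ≤ K * ∫ y : ℝ, Real.exp (-μ * |x - y|) * ‖g y‖ := by
    intro x
    have hsum_q : ((∫ y in Set.Iic x, Real.exp (-μ * |x - y|) * ‖g y‖)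
        + ∫ y in Set.Ioi x, Real.exp (-μ * |x - y|) * ‖g y‖)
        = ∫ y : ℝ, Real.exp (-μ * |x - y|) * ‖g y‖ :=
      integral_Iic_add_Ioi (hq1 x) ((hq2 x).mono_set Set.Ioi_subset_Ici_self)
    have h1 : ∀ y ∈ Set.Iic x, ‖(T x y * P y).mulVec (g y)‖
        ≤ K * (Real.exp (-μ * |x - y|) * ‖g y‖) := by
      intro y hy
      have habs : |x - y| = x - y := abs_of_nonneg (sub_nonneg.mpr hy)
      rw [habs]
      calc ‖(T x y * P y).mulVec (g y)‖ ≤ matOpNorm (T x y * P y) * ‖g y‖ :=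
            DichAux.norm_mulVec_le _ _
        _ ≤ (K * Real.exp (-μ * (x - y))) * ‖g y‖ :=
            mul_le_mul_of_nonneg_right (hPs x y hy) (norm_nonneg _)
        _ = K * (Real.exp (-μ * (x - y)) * ‖g y‖) := by ring
    have h2 : ∀ y ∈ Set.Ici x, ‖(T x y * (1 - P y)).mulVec (g y)‖
        ≤ K * (Real.exp (-μ * |x - y|) * ‖g y‖) := by
      intro y hy
      have habs : |x - y| = y - x := by rw [abs_sub_comm]; exact abs_of_nonneg (sub_nonneg.mpr hy)
      rw [habs]
      calc ‖(T x y * (1 - P y)).mulVec (g y)‖ ≤ matOpNorm (T x y * (1 - P y)) * ‖g y‖ :=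
            DichAux.norm_mulVec_le _ _
        _ ≤ (K * Real.exp (-μ * (y - x))) * ‖g y‖ :=
            mul_le_mul_of_nonneg_right (hPu x y hy) (norm_nonneg _)
        _ = K * (Real.exp (-μ * (y - x)) * ‖g y‖) := by ring
    calc ‖φ x‖ ≤ ‖∫ y in Set.Iic x, (T x y * P y).mulVec (g y)‖
          + ‖∫ y in Set.Ici x, (T x y * (1 - P y)).mulVec (g y)‖ := norm_sub_le _ _
      _ ≤ (∫ y in Set.Iic x, ‖(T x y * P y).mulVec (g y)‖)
          + ∫ y in Set.Ici x, ‖(T x y * (1 - P y)).mulVec (g y)‖ :=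
          add_le_add (norm_integral_le_integral_norm _) (norm_integral_le_integral_norm _)
      _ ≤ (∫ y in Set.Iic x, K * (Real.exp (-μ * |x - y|) * ‖g y‖))
          + ∫ y in Set.Ici x, K * (Real.exp (-μ * |x - y|) * ‖g y‖) := by
          refine add_le_add ?_ ?_
          · exact setIntegral_mono_on (hIg₁ x).norm ((hq1 x).const_mul K)
              measurableSet_Iic h1
          · exact setIntegral_mono_on (hIg₂ x).norm ((hq2 x).const_mul K)
              measurableSet_Ici h2
      _ = K * ((∫ y in Set.Iic x, Real.exp (-μ * |x - y|) * ‖g y‖)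
          + ∫ y in Set.Ioi x, Real.exp (-μ * |x - y|) * ‖g y‖) := by
          rw [MeasureTheory.integral_const_mul, MeasureTheory.integral_const_mul, integral_Ici_eq_integral_Ioi, mul_add]
      _ = K * ∫ y : ℝ, Real.exp (-μ * |x - y|) * ‖g y‖ := by rw [hsum_q]
  -- boundedness
  have hq0int : Integrable (fun t : ℝ => Real.exp (-μ * |t|)) := by
    rw [← integrableOn_univ, ← Set.Iic_union_Ioi (a := (0:ℝ))]
    refine IntegrableOn.union ?_ ?_
    · refine ((DichAux.integrableOn_exp_sub_Iic hμ 0 1).congr_fun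
        (fun y hy => ?_) measurableSet_Iic)
      have : |y| = -(y : ℝ) := abs_of_nonpos hy
      rw [this]
      simp
    · refine ((exp_neg_integrableOn_Ioi 0 hμ).congr_fun (fun y hy => ?_) measurableSet_Ioi)
      have : |y| = (y : ℝ) := abs_of_nonneg (le_of_lt hy)
      rw [this]
  have part2 : ∃ C : ℝ, ∀ x, ‖φ x‖ ≤ C := by
    refine ⟨K * (Cg * ∫ t : ℝ, Real.exp (-μ * |t|)), fun x => ?_⟩
    refine le_trans (part3 x) (mul_le_mul_of_nonneg_left ?_ hK.le)
    have hqint : Integrable (fun y => Real.exp (-μ * |x - y|) * ‖g y‖) := by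
      rw [← integrableOn_univ, ← Set.Iic_union_Ioi (a := x)]
      exact (hq1 x).union ((hq2 x).mono_set Set.Ioi_subset_Ici_self)
    have hker : (fun y : ℝ => Real.exp (-μ * |x - y|))
        = fun y => (fun t : ℝ => Real.exp (-μ * |t|)) (y - x) := by
      funext y; rw [abs_sub_comm]
    have hkerint : Integrable (fun y : ℝ => Real.exp (-μ * |x - y|)) := by
      rw [hker]; exact hq0int.comp_sub_right x
    calc (∫ y : ℝ, Real.exp (-μ * |x - y|) * ‖g y‖)
        ≤ ∫ y : ℝ, Real.exp (-μ * |x - y|) * Cg := by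
          refine integral_mono hqint (hkerint.mul_const Cg) fun y => ?_
          exact mul_le_mul_of_nonneg_left (hCg y) (Real.exp_pos _).le
      _ = Cg * ∫ y : ℝ, Real.exp (-μ * |x - y|) := by rw [MeasureTheory.integral_mul_const]; ring
      _ = Cg * ∫ t : ℝ, Real.exp (-μ * |t|) := by
          rw [hker, integral_sub_right_eq_self (fun t : ℝ => Real.exp (-μ * |t|)) x]
  -- uniqueness
  have part4 : ∀ ψ : ℝ → Fin n → ℂ,
      (∀ x, HasDerivAt ψ ((A x).mulVec (ψ x) + g x) x) →
      (∃ C : ℝ, ∀ x, ‖ψ x‖ ≤ C) → ψ = φ := by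
    rintro ψ hψ' ⟨Cψ, hCψ⟩
    obtain ⟨Cφ, hCφ⟩ := part2
    set δ : ℝ → Fin n → ℂ := fun t => ψ t - φ t with hδdef
    have hδ' : ∀ t, HasDerivAt δ ((A t).mulVec (δ t)) t := by
      intro t
      have hs := (hψ' t).sub (part1 t)
      have he : ((A t).mulVec (ψ t) + g t) - ((A t).mulVec (φ t) + g t)
          = (A t).mulVec (ψ t) - (A t).mulVec (φ t) := add_sub_add_right_eq_sub _ _ _
      rw [he, ← Matrix.mulVec_sub] at hs
      exact hs
    have hδb : ∀ t, ‖δ t‖ ≤ Cψ + Cφ := by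
      intro t
      rw [hδdef]
      exact le_trans (norm_sub_le _ _) (add_le_add (hCψ t) (hCφ t))
    have hCδ0 : 0 ≤ Cψ + Cφ := le_trans (norm_nonneg _) (hδb 0)
    have hlip : ∀ t, LipschitzOnWith (Real.toNNReal CA)
        (fun z : Fin n → ℂ => (A t).mulVec z) Set.univ := by
      intro t
      apply LipschitzWith.lipschitzOnWith
      apply LipschitzWith.of_dist_le_mul
      intro a b
      rw [dist_eq_norm, dist_eq_norm, ← Matrix.mulVec_sub]
      calc ‖(A t).mulVec (a - b)‖ ≤ matOpNorm (A t) * ‖a - b‖ := DichAux.norm_mulVec_le _ _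
        _ ≤ (Real.toNNReal CA : ℝ) * ‖a - b‖ :=
            mul_le_mul_of_nonneg_right (le_trans (hCA t) (Real.le_coe_toNNReal CA))
              (norm_nonneg _)
    have hδcont : Continuous δ := continuous_iff_continuousAt.mpr fun t => (hδ' t).continuousAt
    have hrep : ∀ x₀ x : ℝ, δ x = (T x x₀).mulVec (δ x₀) := by
      intro x₀ x
      have hgc : Continuous (fun s => (T s x₀).mulVec (δ x₀)) :=
        continuous_iff_continuousAt.mpr fun t => (hTode x₀ t (δ x₀)).continuousAt
      have hx₀ : x₀ ∈ Set.Ioo (min x x₀ - 1) (max x x₀ + 1) := by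
        constructor
        · have := min_le_right x x₀; linarith
        · have := le_max_right x x₀; linarith
      have hx : x ∈ Set.Icc (min x x₀ - 1) (max x x₀ + 1) := by
        constructor
        · have := min_le_left x x₀; linarith
        · have := le_max_left x x₀; linarith
      have heq0 : δ x₀ = (T x₀ x₀).mulVec (δ x₀) := by rw [hTid, Matrix.one_mulVec]
      exact ODE_solution_unique_of_mem_Icc (v := fun t z => (A t).mulVec z)
        (s := fun _ => Set.univ) (fun t _ => hlip t) hx₀ hδcont.continuousOn
        (fun t _ => hδ' t) (fun _ _ => trivial) hgc.continuousOn
        (fun t _ => hTode x₀ t (δ x₀)) (fun _ _ => trivial) heq0 hx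
    have hδ0 : ∀ x, δ x = 0 := by
      intro x
      have hPzero : (P x).mulVec (δ x) = 0 := by
        have hb : ∀ y, y ≤ x → ‖(P x).mulVec (δ x)‖
            ≤ K * (Cψ + Cφ) * Real.exp (-μ * (x - y)) := by
          intro y hy
          have e : (P x).mulVec (δ x) = (T x y * P y).mulVec (δ y) := by
            rw [hrep y x, Matrix.mulVec_mulVec, hPcomm]
          rw [e]
          calc ‖(T x y * P y).mulVec (δ y)‖ ≤ matOpNorm (T x y * P y) * ‖δ y‖ :=
                DichAux.norm_mulVec_le _ _
            _ ≤ (K * Real.exp (-μ * (x - y))) * (Cψ + Cφ) :=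
                mul_le_mul (hPs x y hy) (hδb y) (norm_nonneg _) (by positivity)
            _ = K * (Cψ + Cφ) * Real.exp (-μ * (x - y)) := by ring
        have hlim : Filter.Tendsto (fun y : ℝ => K * (Cψ + Cφ) * Real.exp (-μ * (x - y)))
            Filter.atBot (nhds 0) := by
          have h1 : Filter.Tendsto (fun y : ℝ => x - y) Filter.atBot Filter.atTop := by
            have hneg : Filter.Tendsto (fun y : ℝ => -y) Filter.atBot Filter.atTop :=
              tendsto_neg_atBot_atTop
            simp only [sub_eq_add_neg]
            exact Filter.tendsto_atTop_add_const_left _ x hneg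
          have h2 : Filter.Tendsto (fun y : ℝ => -μ * (x - y)) Filter.atBot Filter.atBot :=
            Filter.Tendsto.const_mul_atTop_of_neg (by linarith) h1
          have h3 := Real.tendsto_exp_atBot.comp h2
          have h4 := h3.const_mul (K * (Cψ + Cφ))
          simpa using h4
        refine norm_le_zero_iff.mp (ge_of_tendsto hlim ?_)
        filter_upwards [Filter.eventually_le_atBot x] with y hy using hb y hy
      have hQzero : ((1 : Matrix (Fin n) (Fin n) ℂ) - P x).mulVec (δ x) = 0 := by
        have hcomm' : ∀ y : ℝ, (1 - P x) * T x y = T x y * (1 - P y) := by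
          intro y
          rw [Matrix.sub_mul, Matrix.mul_sub, one_mul, mul_one, hPcomm]
        have hb : ∀ y, x ≤ y → ‖((1 : Matrix (Fin n) (Fin n) ℂ) - P x).mulVec (δ x)‖
            ≤ K * (Cψ + Cφ) * Real.exp (-μ * (y - x)) := by
          intro y hy
          have e : ((1 : Matrix (Fin n) (Fin n) ℂ) - P x).mulVec (δ x)
              = (T x y * (1 - P y)).mulVec (δ y) := by
            rw [hrep y x, Matrix.mulVec_mulVec, hcomm']
          rw [e]
          calc ‖(T x y * (1 - P y)).mulVec (δ y)‖
              ≤ matOpNorm (T x y * (1 - P y)) * ‖δ y‖ := DichAux.norm_mulVec_le _ _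
            _ ≤ (K * Real.exp (-μ * (y - x))) * (Cψ + Cφ) :=
                mul_le_mul (hPu x y hy) (hδb y) (norm_nonneg _) (by positivity)
            _ = K * (Cψ + Cφ) * Real.exp (-μ * (y - x)) := by ring
        have hlim : Filter.Tendsto (fun y : ℝ => K * (Cψ + Cφ) * Real.exp (-μ * (y - x)))
            Filter.atTop (nhds 0) := by
          have h1 : Filter.Tendsto (fun y : ℝ => y - x) Filter.atTop Filter.atTop :=
            Filter.tendsto_atTop_add_const_right _ (-x) Filter.tendsto_id
          have h2 : Filter.Tendsto (fun y : ℝ => -μ * (y - x)) Filter.atTop Filter.atBot :=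
            Filter.Tendsto.const_mul_atTop_of_neg (by linarith) h1
          have h3 := Real.tendsto_exp_atBot.comp h2
          have h4 := h3.const_mul (K * (Cψ + Cφ))
          simpa using h4
        refine norm_le_zero_iff.mp (ge_of_tendsto hlim ?_)
        filter_upwards [Filter.eventually_ge_atTop x] with y hy using hb y hy
      have hdecomp : δ x = (P x).mulVec (δ x)
          + ((1 : Matrix (Fin n) (Fin n) ℂ) - P x).mulVec (δ x) := by
        rw [← Matrix.add_mulVec]
        rw [show P x + ((1 : Matrix (Fin n) (Fin n) ℂ) - P x) = 1 by abel]
        rw [Matrix.one_mulVec]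
      rw [hdecomp, hPzero, hQzero, add_zero]
    funext t
    have := hδ0 t
    rw [hδdef] at this
    exact sub_eq_zero.mp this
  exact ⟨part1, part2, part3, part4⟩
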